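/- Let T, H, n be natural numbers with n ≥ 1, let γ be a real number with 0 < γ ≤ 1, and let ε ≥ 0. Let τ : {0,1,...,n} → ℕ be a strictly increasing sequence of review times with τ(0) = 1, τ(n) = T + 1, and τ(i+1) − τ(i) ≥ H + 1 for every i < n (so each block {τ(i), ..., τ(i+1) − 1} contains the window {τ(i), ..., τ(i) + H}). Let r* , r̃ : ℕ → ℝ be two reward sequences (the per-period rewards of the hindsight-best policy π* and of the bandit-modified policy π̃) that agree outside the windows: r*(t) = r̃(t) whenever τ(i) + H < t ≤ τ(i+1) − 1 for some i < n. Suppose that for every i < n the discounted regret incurred in window i is at most ε, i.e. ∑_{t = τ(i)}^{τ(i)+H} γ^t (r*(t) − r̃(t)) ≤ ε. Then the time-averaged discounted reward of π̃ is within ε·n/T of that of π*: (1/T) ∑_{t=1}^{T} γ^t r̃(t) ≥ (1/T) ∑_{t=1}^{T} γ^t r*(t) − ε·n/T; in particular, since n ≤ T, it is within ε, so π̃ is an ε-equilibrium policy in the sense that (1/T) ∑_{t=1}^{T} γ^t r̃(t) ≥ (1/T) ∑_{t=1}^{T} γ^t r*(t) − ε. -/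
import Mathlib


/-- Quantitative core of Theorem 1: if the two reward sequences agree outside
the windows `{τ i, ..., τ i + H}` and each window has discounted regret at
most `ε`, then the bandit-modified policy is an `ε`-equilibrium policy. -/
theorem equilibrium_of_window_regret
    (T H n : ℕ) (hn : 1 ≤ n)
    (γ : ℝ) (hγ0 : 0 < γ) (hγ1 : γ ≤ 1)
    (ε : ℝ) (hε : 0 ≤ ε)
    (τ : ℕ → ℕ)
    (hτmono : ∀ i < n, τ i < τ (i + 1))
    (hτ0 : τ 0 = 1) (hτn : τ n = T + 1)
    (hτgap : ∀ i < n, H + 1 ≤ τ (i + 1) - τ i)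
    (rstar rtil : ℕ → ℝ)
    (hagree : ∀ i < n, ∀ t, τ i + H < t → t ≤ τ (i + 1) - 1 → rstar t = rtil t)
    (hwindow : ∀ i < n,
      ∑ t ∈ Finset.Icc (τ i) (τ i + H), γ ^ t * (rstar t - rtil t) ≤ ε) :
    ((1 : ℝ) / T) * ∑ t ∈ Finset.Icc 1 T, γ ^ t * rtil t ≥
        ((1 : ℝ) / T) * ∑ t ∈ Finset.Icc 1 T, γ ^ t * rstar t - ε * n / T ∧
    ((1 : ℝ) / T) * ∑ t ∈ Finset.Icc 1 T, γ ^ t * rtil t ≥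
        ((1 : ℝ) / T) * ∑ t ∈ Finset.Icc 1 T, γ ^ t * rstar t - ε := by
  set g : ℕ → ℝ := fun t => γ ^ t * (rstar t - rtil t) with hg
  -- τ grows at least by 1 each step
  have hmono : ∀ m, m ≤ n → τ 0 + m ≤ τ m := by
    intro m hm
    induction m with
    | zero => simp
    | succ k ih =>
      have hk : k < n := hm
      have h1 := ih hk.le
      have h2 := hτmono k hk
      omega
  have hnT : n ≤ T := by have := hmono n le_rfl; omega
  have hT1 : 1 ≤ T := le_trans hn hnT
  have hTpos : (0 : ℝ) < (T : ℝ) := by exact_mod_cast Nat.lt_of_lt_of_le Nat.zero_lt_one hT1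
  -- telescoping decomposition
  have htel : ∀ m, m ≤ n → ∑ t ∈ Finset.Ico (τ 0) (τ m), g t
      = ∑ i ∈ Finset.range m, ∑ t ∈ Finset.Ico (τ i) (τ (i + 1)), g t := by
    intro m hm
    induction m with
    | zero => simp
    | succ k ih =>
      have hk : k < n := hm
      have h1 : τ 0 ≤ τ k := by have := hmono k hk.le; omega
      have h2 : τ k ≤ τ (k + 1) := (hτmono k hk).le
      rw [Finset.sum_range_succ, ← ih hk.le, Finset.sum_Ico_consecutive g h1 h2]
  -- each block contributes at most ε
  have hblock : ∀ i, i < n → ∑ t ∈ Finset.Ico (τ i) (τ (i + 1)), g t ≤ ε := by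
    intro i hi
    have hgap := hτgap i hi
    have hlt := hτmono i hi
    have hsub : Finset.Ico (τ i) (τ i + H + 1) ⊆ Finset.Ico (τ i) (τ (i + 1)) :=
      Finset.Ico_subset_Ico le_rfl (by omega)
    have hzero : ∀ t ∈ Finset.Ico (τ i) (τ (i + 1)),
        t ∉ Finset.Ico (τ i) (τ i + H + 1) → g t = 0 := by
      intro t ht hnt
      simp only [Finset.mem_Ico] at ht hnt
      have h1 : τ i + H < t := by omega
      have h2 : t ≤ τ (i + 1) - 1 := by omega
      have := hagree i hi t h1 h2
      simp [hg, this]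
    rw [← Finset.sum_subset hsub hzero, Finset.Ico_add_one_right_eq_Icc]
    exact hwindow i hi
  -- total regret bound
  have htot : ∑ t ∈ Finset.Icc 1 T, g t ≤ ε * n := by
    have h1 : Finset.Icc 1 T = Finset.Ico (τ 0) (τ n) := by
      rw [hτ0, hτn, Finset.Ico_add_one_right_eq_Icc]
    rw [h1, htel n le_rfl]
    calc ∑ i ∈ Finset.range n, ∑ t ∈ Finset.Ico (τ i) (τ (i + 1)), g t
        ≤ ∑ _i ∈ Finset.range n, ε :=
          Finset.sum_le_sum fun i hi => hblock i (Finset.mem_range.mp hi)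
      _ = ε * n := by rw [Finset.sum_const, Finset.card_range, nsmul_eq_mul, mul_comm]
  set A := ∑ t ∈ Finset.Icc 1 T, γ ^ t * rstar t with hA
  set B := ∑ t ∈ Finset.Icc 1 T, γ ^ t * rtil t with hB
  have hdiff : A - B = ∑ t ∈ Finset.Icc 1 T, g t := by
    rw [hA, hB, ← Finset.sum_sub_distrib]
    exact Finset.sum_congr rfl fun t _ => by simp [hg]; ring
  have key : A - B ≤ ε * n := hdiff ▸ htot
  have main : ∀ c : ℝ, A - B ≤ c → (1 : ℝ) / T * A - c / T ≤ (1 : ℝ) / T * B := by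
    intro c hc
    have h1 : (A - c) / T ≤ B / T := by
      exact (div_le_div_iff_of_pos_right hTpos).mpr (by linarith)
    have e1 : (1 : ℝ) / T * A - c / T = (A - c) / T := by ring
    have e2 : (1 : ℝ) / T * B = B / T := by ring
    linarith
  constructor
  · exact main (ε * n) key
  · have hεT : A - B ≤ ε * T := by
      have : (n : ℝ) ≤ T := by exact_mod_cast hnT
      nlinarith
    have := main (ε * T) hεT
    rw [mul_div_assoc, div_self (ne_of_gt hTpos), mul_one] at this
    exact this
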